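/- For the ℓ₁ regularized problem, uniqueness equals sharpness: if J₀ is a polyhedral norm on ℝᵖ (e.g., the ℓ₁ norm), D : ℝᵖ → ℝⁿ linear, J = J₀ ∘ D*, and Φ linear with y₀ = Φx₀, then x₀ is the unique minimizer of min{J(x) : Φx = y₀} if and only if x₀ is a sharp minimizer of this problem. -/

import Mathlib

set_option maxHeartbeats 1000000


open RealInnerProductSpace

/-- For a polyhedral norm `J₀` (the maximum of finitely many linear functionals,
symmetric and positive off the origin, e.g. the ℓ₁ norm) and `J = J₀ ∘ D*`,
the point `x₀` is the unique minimizer of `min{J(x) : Φx = Φx₀}` iff it is a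
sharp minimizer of this problem. -/
theorem unique_iff_sharp_polyhedral
    {p n m : ℕ}
    (V : Finset (EuclideanSpace ℝ (Fin p))) (hV : V.Nonempty)
    (hsymm : ∀ v ∈ V, -v ∈ V)
    (J₀ : EuclideanSpace ℝ (Fin p) → ℝ)
    (hJ₀ : ∀ u, J₀ u = V.sup' hV fun v => ⟪v, u⟫)
    (hpos : ∀ u, u ≠ 0 → 0 < J₀ u)
    (Dstar : EuclideanSpace ℝ (Fin n) →ₗ[ℝ] EuclideanSpace ℝ (Fin p))
    (Φ : EuclideanSpace ℝ (Fin n) →ₗ[ℝ] EuclideanSpace ℝ (Fin m))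
    (x₀ : EuclideanSpace ℝ (Fin n)) :
    (∀ x, Φ x = Φ x₀ → x ≠ x₀ → J₀ (Dstar x₀) < J₀ (Dstar x)) ↔
    (∃ c > 0, ∃ ε > 0, ∀ x, Φ x = Φ x₀ → ‖x - x₀‖ ≤ ε →
      J₀ (Dstar x) ≥ J₀ (Dstar x₀) + c * ‖x - x₀‖) := by
  classical
  set s₀ : ℝ := J₀ (Dstar x₀) with hs₀def
  constructor
  · -- uniqueness → sharpness
    intro huniq
    -- a bound on the inner products
    have hDcont : Continuous (⇑Dstar) := Dstar.continuous_of_finiteDimensional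
    set L : EuclideanSpace ℝ (Fin n) →L[ℝ] EuclideanSpace ℝ (Fin p) :=
      Dstar.toContinuousLinearMap with hLdef
    set N : ℝ := V.sup' hV fun v => ‖v‖ with hNdef
    set C : ℝ := 1 + ‖L‖ * N with hCdef
    have hN0 : 0 ≤ N := by
      obtain ⟨v, hv⟩ := hV
      exact le_trans (norm_nonneg v) (Finset.le_sup' (fun v => ‖v‖) hv)
    have hC0 : 0 < C := by positivity
    have hCb : ∀ v ∈ V, ∀ h, |⟪v, Dstar h⟫| ≤ C * ‖h‖ := by
      intro v hv h
      calc |⟪v, Dstar h⟫| ≤ ‖v‖ * ‖Dstar h‖ := abs_real_inner_le_norm v (Dstar h)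
        _ ≤ N * (‖L‖ * ‖h‖) := by
            have h1 : ‖v‖ ≤ N := Finset.le_sup' (fun v => ‖v‖) hv
            have h2 : ‖Dstar h‖ ≤ ‖L‖ * ‖h‖ := L.le_opNorm h
            exact mul_le_mul h1 h2 (norm_nonneg _) hN0
        _ ≤ C * ‖h‖ := by
            rw [hCdef]; ring_nf; nlinarith [norm_nonneg h]
    -- active set
    have hs₀ : s₀ = V.sup' hV fun v => ⟪v, Dstar x₀⟫ := by rw [hs₀def, hJ₀]
    set V₀ : Finset (EuclideanSpace ℝ (Fin p)) :=
      V.filter (fun v => ⟪v, Dstar x₀⟫ = s₀) with hV₀def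
    have hV₀ : V₀.Nonempty := by
      obtain ⟨v, hv, hveq⟩ := Finset.exists_mem_eq_sup' hV (fun v => ⟪v, Dstar x₀⟫)
      exact ⟨v, Finset.mem_filter.2 ⟨hv, by rw [hs₀, hveq]⟩⟩
    have hV₀sub : V₀ ⊆ V := Finset.filter_subset _ _
    -- the gap
    set W : Finset (EuclideanSpace ℝ (Fin p)) :=
      V.filter (fun v => ⟪v, Dstar x₀⟫ ≠ s₀) with hWdef
    set δ : ℝ := if hW : W.Nonempty
      then (W.inf' hW fun v => s₀ - ⟪v, Dstar x₀⟫) / (2 * C) else 1 with hδdef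
    have hWlt : ∀ v ∈ W, ⟪v, Dstar x₀⟫ < s₀ := by
      intro v hv
      obtain ⟨hvV, hvne⟩ := Finset.mem_filter.1 hv
      exact lt_of_le_of_ne (hs₀ ▸ Finset.le_sup' (fun v => ⟪v, Dstar x₀⟫) hvV) hvne
    have hδ0 : 0 < δ := by
      rw [hδdef]
      split_ifs with hW
      · apply div_pos _ (by positivity)
        obtain ⟨v, hv, hveq⟩ := Finset.exists_mem_eq_inf' hW (fun v => s₀ - ⟪v, Dstar x₀⟫)
        rw [hveq]; linarith [hWlt v hv]
      · exact one_pos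
    have hWgap : ∀ v ∈ W, ⟪v, Dstar x₀⟫ ≤ s₀ - 2 * C * δ := by
      intro v hv
      rw [hδdef]
      split_ifs with hW
      · have h1 : W.inf' hW (fun v => s₀ - ⟪v, Dstar x₀⟫) ≤ s₀ - ⟪v, Dstar x₀⟫ :=
          Finset.inf'_le _ hv
        have h2 : 2 * C * ((W.inf' hW fun v => s₀ - ⟪v, Dstar x₀⟫) / (2 * C)) =
            W.inf' hW fun v => s₀ - ⟪v, Dstar x₀⟫ := by
          field_simp
        rw [h2]; linarith
      · exact absurd ⟨v, hv⟩ hW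
    -- the sharpness function
    set f : EuclideanSpace ℝ (Fin n) → ℝ :=
      fun h => V₀.sup' hV₀ fun v => ⟪v, Dstar h⟫ with hfdef
    -- key identity
    have hkey : ∀ h, ‖h‖ ≤ δ → J₀ (Dstar x₀ + Dstar h) = s₀ + f h := by
      intro h hh
      rw [hJ₀]
      apply le_antisymm
      · apply Finset.sup'_le
        intro v hv
        rw [inner_add_right]
        by_cases hva : ⟪v, Dstar x₀⟫ = s₀
        · have hvV₀ : v ∈ V₀ := Finset.mem_filter.2 ⟨hv, hva⟩
          have := Finset.le_sup' (fun v => ⟪v, Dstar h⟫) hvV₀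
          rw [hva]; exact (add_le_add_iff_left s₀).2 this
        · have hvW : v ∈ W := Finset.mem_filter.2 ⟨hv, hva⟩
          have h1 : ⟪v, Dstar x₀⟫ ≤ s₀ - 2 * C * δ := hWgap v hvW
          have h2 : ⟪v, Dstar h⟫ ≤ C * δ := by
            have := (abs_le.1 (hCb v hv h)).2
            have : ⟪v, Dstar h⟫ ≤ C * ‖h‖ := this
            nlinarith
          obtain ⟨v₁, hv₁⟩ := hV₀
          have h3 : -(C * δ) ≤ f h := by
            have hb := (abs_le.1 (hCb v₁ (hV₀sub hv₁) h)).1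
            have h4 : -(C * δ) ≤ ⟪v₁, Dstar h⟫ := by nlinarith
            exact le_trans h4 (Finset.le_sup' (fun v => ⟪v, Dstar h⟫) hv₁)
          linarith
      · obtain ⟨v, hv, hveq⟩ := Finset.exists_mem_eq_sup' hV₀ (fun v => ⟪v, Dstar h⟫)
        have hva : ⟪v, Dstar x₀⟫ = s₀ := (Finset.mem_filter.1 hv).2
        calc s₀ + f h = ⟪v, Dstar x₀ + Dstar h⟫ := by
              rw [hfdef]
              simp only [inner_add_right, hveq, hva]
          _ ≤ _ := Finset.le_sup' (fun v => ⟪v, Dstar x₀ + Dstar h⟫) (hV₀sub hv)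
    -- positive homogeneity of f
    have hhom : ∀ (t : ℝ), 0 ≤ t → ∀ h, f (t • h) = t * f h := by
      intro t ht h
      rw [hfdef]
      simp only [map_smul, real_inner_smul_right]
      exact (Finset.comp_sup'_eq_sup'_comp hV₀ (fun x => t * x)
        (fun x y => mul_max_of_nonneg x y ht)).symm
    -- continuity of f
    have hfcont : Continuous f := by
      apply Continuous.finset_sup'_apply hV₀
      intro v _
      exact continuous_const.inner hDcont
    -- the compact set of unit kernel directions
    set S : Set (EuclideanSpace ℝ (Fin n)) :=
      Metric.sphere 0 1 ∩ {h | Φ h = 0} with hSdef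
    have hScomp : IsCompact S := by
      apply (isCompact_sphere (0 : EuclideanSpace ℝ (Fin n)) 1).inter_right
      exact isClosed_eq Φ.continuous_of_finiteDimensional continuous_const
    by_cases hSne : S.Nonempty
    · obtain ⟨h₀, hh₀S, hh₀min⟩ := hScomp.exists_isMinOn hSne hfcont.continuousOn
      obtain ⟨hh₀sph, hh₀ker⟩ := hh₀S
      have hh₀norm : ‖h₀‖ = 1 := by simpa using hh₀sph
      have hh₀ne : h₀ ≠ 0 := by
        intro h; rw [h] at hh₀norm; simp at hh₀norm
      -- f h₀ > 0 from uniqueness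
      have hc0 : 0 < f h₀ := by
        have hxne : x₀ + δ • h₀ ≠ x₀ := by
          intro h
          apply hh₀ne
          have := add_eq_left.mp h
          exact (smul_eq_zero.1 this).resolve_left (ne_of_gt hδ0)
        have hΦ : Φ (x₀ + δ • h₀) = Φ x₀ := by
          have hk : Φ h₀ = 0 := hh₀ker
          simp [map_add, map_smul, hk]
        have hlt := huniq (x₀ + δ • h₀) hΦ hxne
        have heq : J₀ (Dstar (x₀ + δ • h₀)) = s₀ + δ * f h₀ := by
          rw [map_add, hkey (δ • h₀) (by rw [norm_smul, hh₀norm]; simp [abs_of_pos hδ0]),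
            hhom δ hδ0.le]
        rw [heq] at hlt
        nlinarith
      refine ⟨f h₀, hc0, δ, hδ0, ?_⟩
      intro x hΦx hxnorm
      by_cases hx : x = x₀
      · simp [hx, hs₀def.symm]
      · set h : EuclideanSpace ℝ (Fin n) := x - x₀ with hhdef
        have hhne : h ≠ 0 := sub_ne_zero.2 hx
        have hhn : 0 < ‖h‖ := norm_pos_iff.2 hhne
        set u : EuclideanSpace ℝ (Fin n) := ‖h‖⁻¹ • h with hudef
        have huS : u ∈ S := by
          constructor
          · simp [hudef, norm_smul, abs_of_pos (inv_pos.2 hhn), inv_mul_cancel₀ hhn.ne']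
          · have : Φ h = 0 := by rw [hhdef, map_sub, hΦx, sub_self]
            simp [hudef, map_smul, this]
        have hhu : ‖h‖ • u = h := by
          rw [hudef, smul_smul, mul_inv_cancel₀ hhn.ne', one_smul]
        have hDx : Dstar x = Dstar x₀ + Dstar h := by
          rw [hhdef, map_sub]; abel
        have hJx : J₀ (Dstar x) = s₀ + f h := by
          rw [hDx, hkey h hxnorm]
        rw [hJx]
        have hfh : f h = ‖h‖ * f u := by
          have := hhom ‖h‖ (norm_nonneg h) u
          rw [hhu] at this
          exact this
        have hmin' : f h₀ ≤ f u := hh₀min huS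
        rw [hfh]
        nlinarith [hhn]
    · -- trivial kernel
      refine ⟨1, one_pos, 1, one_pos, ?_⟩
      intro x hΦx _
      have hx : x = x₀ := by
        by_contra hx
        have hhne : x - x₀ ≠ 0 := sub_ne_zero.2 hx
        have hhn : 0 < ‖x - x₀‖ := norm_pos_iff.2 hhne
        apply hSne
        refine ⟨‖x - x₀‖⁻¹ • (x - x₀), ?_, ?_⟩
        · simp [norm_smul, abs_of_pos (inv_pos.2 hhn), inv_mul_cancel₀ hhn.ne']
        · have : Φ (x - x₀) = 0 := by rw [map_sub, hΦx, sub_self]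
          simp [map_smul, this]
      simp [hx, hs₀def]
  · -- sharpness → uniqueness
    rintro ⟨c, hc, ε, hε, hsharp⟩ x hΦx hxne
    have hhn : 0 < ‖x - x₀‖ := norm_pos_iff.2 (sub_ne_zero.2 hxne)
    set t : ℝ := min 1 (ε / ‖x - x₀‖) with htdef
    have ht0 : 0 < t := lt_min one_pos (div_pos hε hhn)
    have ht1 : t ≤ 1 := min_le_left _ _
    set xt : EuclideanSpace ℝ (Fin n) := x₀ + t • (x - x₀) with hxtdef
    have hΦt : Φ xt = Φ x₀ := by
      have : Φ (x - x₀) = 0 := by rw [map_sub, hΦx, sub_self]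
      simp [hxtdef, map_add, map_smul, this]
    have hdist : ‖xt - x₀‖ = t * ‖x - x₀‖ := by
      simp [hxtdef, norm_smul, abs_of_pos ht0]
    have hle : ‖xt - x₀‖ ≤ ε := by
      rw [hdist]
      calc t * ‖x - x₀‖ ≤ (ε / ‖x - x₀‖) * ‖x - x₀‖ :=
            mul_le_mul_of_nonneg_right (min_le_right _ _) hhn.le
        _ = ε := div_mul_cancel₀ ε hhn.ne'
    have h1 := hsharp xt hΦt hle
    have h2 : Dstar xt = (1 - t) • Dstar x₀ + t • Dstar x := by
      rw [hxtdef, map_add, map_smul, map_sub]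
      module
    have h3 : J₀ (Dstar xt) ≤ (1 - t) * s₀ + t * J₀ (Dstar x) := by
      rw [h2, hJ₀, hs₀def, hJ₀ (Dstar x₀), hJ₀ (Dstar x)]
      apply Finset.sup'_le
      intro v hv
      rw [inner_add_right, real_inner_smul_right, real_inner_smul_right]
      exact add_le_add
        (mul_le_mul_of_nonneg_left (Finset.le_sup' (fun v => ⟪v, Dstar x₀⟫) hv) (by linarith))
        (mul_le_mul_of_nonneg_left (Finset.le_sup' (fun v => ⟪v, Dstar x⟫) hv) ht0.le)
    rw [hdist] at h1
    nlinarith [mul_pos hc (mul_pos ht0 hhn)]
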